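/- Let A be an n×n Hermitian matrix with smallest eigenvalue λ₁ whose eigenspace is W₁, with spectral gap γ > 0. Let U ∈ C^{n×k} be a matrix with orthonormal columns, and let μ ∈ R and R = A U - μ U. Then ||P^{W₁^⊥} U|| ≤ (1/γ)(|μ - λ₁| + ||R||), where ||·|| is the spectral norm and P^{W₁^⊥} is the orthogonal projector onto the orthogonal complement of W₁. -/

import Mathlib

set_option maxHeartbeats 1000000


open scoped Matrix

/-- The orthogonal projector onto a subspace `W`,
viewed as a continuous linear map on the ambient space. -/
noncomputable def projCLM {n : ℕ} (W : Submodule ℂ (EuclideanSpace ℂ (Fin n))) :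
    EuclideanSpace ℂ (Fin n) →L[ℂ] EuclideanSpace ℂ (Fin n) :=
  W.subtypeL.comp (W.orthogonalProjectionOnto)

open scoped InnerProductSpace ComplexConjugate

/-- Let `A` be Hermitian with eigenvalues `lam 0 ≤ ⋯ ≤ lam (n-1)` (orthonormal
eigenbasis `w`), smallest eigenvalue `lam 0` with eigenspace `W₁` of dimension
`m`, and spectral gap `γ = lam m - lam 0 > 0`.  For a matrix `U` with
orthonormal columns, `μ ∈ ℝ` and residual `R = A U - μ U`, one has
`‖P^{W₁^⊥} U‖ ≤ (|μ - lam 0| + ‖R‖)/γ` in the spectral norm. -/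
theorem stmt9 {n k : ℕ} (hn : 0 < n) (A : Matrix (Fin n) (Fin n) ℂ)
    (hA : A.IsHermitian)
    (lam : Fin n → ℝ) (hmono : Monotone lam)
    (w : OrthonormalBasis (Fin n) ℂ (EuclideanSpace ℂ (Fin n)))
    (heig : ∀ i, Matrix.toEuclideanLin A (w i) = (lam i : ℂ) • w i)
    (m : ℕ) (hm : m < n) (hm0 : 0 < m)
    (hmul : ∀ i : Fin n, (i : ℕ) < m → lam i = lam ⟨0, hn⟩)
    (hgap : lam ⟨0, hn⟩ < lam ⟨m, hm⟩)
    (U : Matrix (Fin n) (Fin k) ℂ) (hU : Uᴴ * U = 1) (μ : ℝ) :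
    ‖(projCLM (Module.End.eigenspace
        (Matrix.toEuclideanLin A : Module.End ℂ (EuclideanSpace ℂ (Fin n)))
        ((lam ⟨0, hn⟩ : ℝ) : ℂ))ᗮ).comp
        (LinearMap.toContinuousLinearMap (Matrix.toEuclideanLin U))‖ ≤
      (1 / (lam ⟨m, hm⟩ - lam ⟨0, hn⟩)) *
        (|μ - lam ⟨0, hn⟩| +
          ‖LinearMap.toContinuousLinearMap
            (Matrix.toEuclideanLin (A * U - (μ : ℂ) • U))‖) := by
  classical
  set lam1 : ℝ := lam ⟨0, hn⟩ with hlam1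
  set γ : ℝ := lam ⟨m, hm⟩ - lam1 with hγdef
  have hγ : 0 < γ := sub_pos.2 hgap
  set T : EuclideanSpace ℂ (Fin n) →ₗ[ℂ] EuclideanSpace ℂ (Fin n) :=
    Matrix.toEuclideanLin A with hTdef
  have hsym : T.IsSymmetric := Matrix.isHermitian_iff_isSymmetric.1 hA
  set W₁ : Submodule ℂ (EuclideanSpace ℂ (Fin n)) :=
    Module.End.eigenspace (T : Module.End ℂ (EuclideanSpace ℂ (Fin n))) ((lam1 : ℝ) : ℂ)
    with hW₁def
  set Ulin : EuclideanSpace ℂ (Fin k) →ₗ[ℂ] EuclideanSpace ℂ (Fin n) :=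
    Matrix.toEuclideanLin U with hUlin
  set RCLM := LinearMap.toContinuousLinearMap
      (Matrix.toEuclideanLin (A * U - (μ : ℂ) • U)) with hRCLM
  -- residual identity
  have hres : ∀ x : EuclideanSpace ℂ (Fin k),
      RCLM x = T (Ulin x) - ((μ : ℂ)) • (Ulin x) := by
    intro x
    show Matrix.toEuclideanLin (A * U - (μ : ℂ) • U) x = _
    rw [map_sub, map_smul]
    simp only [LinearMap.sub_apply, LinearMap.smul_apply]
    congr 1
    show Matrix.toEuclideanLin (A * U) x = T (Ulin x)
    simp [Matrix.toEuclideanLin_apply, hTdef, hUlin, Matrix.mulVec_mulVec]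
  -- U preserves norms
  have hUiso : ∀ x : EuclideanSpace ℂ (Fin k), ‖Ulin x‖ = ‖x‖ := by
    intro x
    have hinner : ⟪Ulin x, Ulin x⟫_ℂ = ⟪x, x⟫_ℂ := by
      have h1 : ⟪x, LinearMap.adjoint Ulin (Ulin x)⟫_ℂ = ⟪Ulin x, Ulin x⟫_ℂ :=
        LinearMap.adjoint_inner_right Ulin x (Ulin x)
      have h2 : LinearMap.adjoint Ulin (Ulin x) = x := by
        rw [hUlin, ← Matrix.toEuclideanLin_conjTranspose_eq_adjoint]
        have : Matrix.toEuclideanLin Uᴴ (Matrix.toEuclideanLin U x)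
            = Matrix.toEuclideanLin (Uᴴ * U) x := by
          simp [Matrix.toEuclideanLin_apply, Matrix.mulVec_mulVec]
        rw [this, hU]
        simp [Matrix.toEuclideanLin_apply]
      rw [← h1, h2]
    rw [@norm_eq_sqrt_re_inner ℂ, @norm_eq_sqrt_re_inner ℂ, hinner]
  -- Parseval
  have hpars : ∀ v : EuclideanSpace ℂ (Fin n),
      ‖v‖ ^ 2 = ∑ i, ‖(⟪w i, v⟫_ℂ)‖ ^ 2 := by
    intro v
    have h1 : ‖v‖ = Real.sqrt (∑ i, ‖(⟪w i, v⟫_ℂ)‖ ^ 2) := by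
      rw [← w.repr.norm_map v, EuclideanSpace.norm_eq]
      congr 1
      refine Finset.sum_congr rfl fun i _ => ?_
      rw [w.repr_apply_apply]
    rw [h1, Real.sq_sqrt (by positivity)]
  -- eigen-coefficient formula
  have hcoef : ∀ (v : EuclideanSpace ℂ (Fin n)) (i : Fin n),
      ⟪w i, T v⟫_ℂ = (lam i : ℂ) * ⟪w i, v⟫_ℂ := by
    intro v i
    rw [← hsym (w i) v, heig i, inner_smul_left]
    simp
  have hC : (0:ℝ) ≤ (1 / γ) * (|μ - lam1| + ‖RCLM‖) :=
    mul_nonneg (one_div_nonneg.2 hγ.le)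
      (add_nonneg (abs_nonneg _) (norm_nonneg _))
  refine ContinuousLinearMap.opNorm_le_bound _ hC fun x => ?_
  set u : EuclideanSpace ℂ (Fin n) := Ulin x with hu
  set c : Fin n → ℂ := fun i => ⟪w i, u⟫_ℂ with hc
  set cq : EuclideanSpace ℂ (Fin n) :=
    WithLp.toLp 2 (fun i : Fin n => if (i : ℕ) < m then c i else 0 : Fin n → ℂ) with hcq
  set q : EuclideanSpace ℂ (Fin n) := w.repr.symm cq with hq
  have hreprq : ∀ j : Fin n, ⟪w j, q⟫_ℂ = (if (j : ℕ) < m then c j else 0) := by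
    intro j
    rw [← w.repr_apply_apply, hq, LinearIsometryEquiv.apply_symm_apply]
  have hqW : q ∈ W₁ := by
    rw [hq, ← w.sum_repr_symm]
    refine Submodule.sum_mem _ fun i _ => ?_
    by_cases hi : (i : ℕ) < m
    · refine Submodule.smul_mem _ _ ?_
      rw [hW₁def, Module.End.mem_eigenspace_iff]
      show T (w i) = _
      rw [hTdef, heig i, hmul i hi, hlam1]
    · have : cq i = 0 := by simp [hcq, hi]
      rw [this, zero_smul]
      exact Submodule.zero_mem _
  -- norm of u - q
  have huq : ‖u - q‖ ^ 2 = ∑ i : Fin n, (if (i : ℕ) < m then (0:ℝ) else ‖c i‖ ^ 2) := by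
    rw [hpars]
    refine Finset.sum_congr rfl fun i _ => ?_
    rw [inner_sub_right, hreprq i]
    by_cases hi : (i : ℕ) < m <;> simp [hi, hc]
  -- norm of (T - lam1) u
  have hTq : ‖T u - ((lam1 : ℂ)) • u‖ ^ 2 = ∑ i : Fin n, (lam i - lam1) ^ 2 * ‖c i‖ ^ 2 := by
    rw [hpars]
    refine Finset.sum_congr rfl fun i _ => ?_
    rw [inner_sub_right, inner_smul_right, hcoef]
    have : (lam i : ℂ) * ⟪w i, u⟫_ℂ - (lam1 : ℂ) * ⟪w i, u⟫_ℂ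
        = ((lam i - lam1 : ℝ) : ℂ) * c i := by
      push_cast
      ring
    rw [this, norm_mul, mul_pow, Complex.norm_real, Real.norm_eq_abs, sq_abs]
  -- gap comparison
  have hsq : γ ^ 2 * ‖u - q‖ ^ 2 ≤ ‖T u - ((lam1 : ℂ)) • u‖ ^ 2 := by
    rw [huq, hTq, Finset.mul_sum]
    refine Finset.sum_le_sum fun i _ => ?_
    by_cases hi : (i : ℕ) < m
    · simp [hi]
      positivity
    · simp only [hi, if_false]
      have hle : γ ≤ lam i - lam1 := by
        have : lam ⟨m, hm⟩ ≤ lam i := hmono (by simpa [Fin.le_def] using not_lt.1 hi)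
        simp [hγdef]
        linarith
      have := pow_le_pow_left₀ hγ.le hle 2
      exact mul_le_mul_of_nonneg_right this (by positivity)
  have hgapineq : γ * ‖u - q‖ ≤ ‖T u - ((lam1 : ℂ)) • u‖ := by
    have h2 : (γ * ‖u - q‖) ^ 2 ≤ ‖T u - ((lam1 : ℂ)) • u‖ ^ 2 := by
      rw [mul_pow]; exact hsq
    have := Real.sqrt_le_sqrt h2
    rwa [Real.sqrt_sq (by positivity), Real.sqrt_sq (norm_nonneg _)] at this
  -- triangle inequality to the residual
  have htri : ‖T u - ((lam1 : ℂ)) • u‖ ≤ (|μ - lam1| + ‖RCLM‖) * ‖x‖ := by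
    have hdecomp : T u - ((lam1 : ℂ)) • u
        = (T u - ((μ : ℂ)) • u) + (((μ - lam1 : ℝ) : ℂ)) • u := by
      push_cast
      module
    rw [hdecomp]
    refine le_trans (norm_add_le _ _) ?_
    have h1 : ‖T u - ((μ : ℂ)) • u‖ ≤ ‖RCLM‖ * ‖x‖ := by
      rw [← hres x]
      exact RCLM.le_opNorm x
    have h2 : ‖(((μ - lam1 : ℝ) : ℂ)) • u‖ = |μ - lam1| * ‖x‖ := by
      rw [norm_smul, Complex.norm_real, Real.norm_eq_abs, hu, hUiso]
    rw [h2]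
    linarith
  -- projection is closest point
  have hPle : ‖projCLM W₁ᗮ u‖ ≤ ‖u - q‖ := by
    have h0 : projCLM W₁ᗮ u = u - W₁.starProjection u := by
      show W₁ᗮ.starProjection u = _
      rw [Submodule.starProjection_orthogonal_val]
    rw [h0, Submodule.starProjection_minimal]
    refine ciInf_le ⟨0, ?_⟩ (⟨q, hqW⟩ : W₁)
    rintro y ⟨z, rfl⟩
    exact norm_nonneg _
  -- put everything together
  have hLHS : ((projCLM W₁ᗮ).comp
      (LinearMap.toContinuousLinearMap Ulin)) x = projCLM W₁ᗮ u := by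
    simp [hu]
  rw [hLHS]
  calc ‖projCLM W₁ᗮ u‖ ≤ ‖u - q‖ := hPle
    _ ≤ (1 / γ) * ‖T u - ((lam1 : ℂ)) • u‖ := by
        rw [one_div, inv_mul_eq_div, le_div_iff₀ hγ]
        linarith
    _ ≤ (1 / γ) * ((|μ - lam1| + ‖RCLM‖) * ‖x‖) :=
        mul_le_mul_of_nonneg_left htri (by positivity)
    _ = (1 / γ) * (|μ - lam1| + ‖RCLM‖) * ‖x‖ := by ring
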